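/- Well-definedness on equal-length representatives: if σ has length m, σ' has length n, τ has length m, τ' has length n, σ ≈ τ, σ' ≈ τ', then σ^n ⪯ σ'^m if and only if τ^n ⪯ τ'^m. -/

import Mathlib

/-- Equivalence `≈` derived from the weak preorder `⪯`. -/
def eqv {X : Type*} (le : List X → List X → Prop) (σ τ : List X) : Prop :=
  le σ τ ∧ le τ σ

/-- Strict part `≺` of the weak preorder `⪯`. -/
def slt {X : Type*} (le : List X → List X → Prop) (σ τ : List X) : Prop :=
  le σ τ ∧ ¬ le τ σ

/-- n-fold repetition `σ^n` of a sequence. -/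
def rep {X : Type*} (σ : List X) (n : ℕ) : List X :=
  (List.replicate n σ).flatten

lemma rep_succ {X : Type*} (σ : List X) (k : ℕ) : rep σ (k + 1) = σ ++ rep σ k := by
  simp [rep, List.replicate_succ]

lemma rep_ne {X : Type*} (σ : List X) (hσ : σ ≠ []) {k : ℕ} (hk : 1 ≤ k) :
    rep σ k ≠ [] := by
  obtain ⟨k, rfl⟩ := Nat.exists_eq_add_of_le hk
  rw [Nat.add_comm, rep_succ]
  simp [hσ]

lemma rep_eqv {X : Type*} (le : List X → List X → Prop)
    (hrefl : ∀ σ : List X, σ ≠ [] → le σ σ)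
    (htrans : ∀ σ τ ρ : List X, σ ≠ [] → τ ≠ [] → ρ ≠ [] → le σ τ → le τ ρ → le σ ρ)
    (ax21 : ∀ σ : List X, σ ≠ [] → eqv le (σ ++ σ) σ)
    (ax23 : ∀ σ σ' σ'' : List X, σ ≠ [] → σ' ≠ [] → σ'' ≠ [] → eqv le σ' σ'' → eqv le (σ ++ σ') (σ ++ σ''))
    (σ : List X) (hσ : σ ≠ []) : ∀ k, 1 ≤ k → eqv le (rep σ k) σ := by
  intro k
  induction k with
  | zero => omega
  | succ k ih =>
    intro _
    rcases Nat.eq_or_lt_of_le (Nat.one_le_iff_ne_zero.mpr (Nat.succ_ne_zero k)) with h | h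
    · have : rep σ 1 = σ := by simp [rep]
      have hk0 : k = 0 := by omega
      subst hk0
      rw [show (0+1)=1 from rfl, this]
      exact ⟨hrefl σ hσ, hrefl σ hσ⟩
    · have hk : 1 ≤ k := by omega
      have h1 := ih hk
      have hne : rep σ k ≠ [] := rep_ne σ hσ hk
      have hne2 : σ ++ rep σ k ≠ [] := by simp [hσ]
      have hne3 : σ ++ σ ≠ [] := by simp [hσ]
      have h2 : eqv le (σ ++ rep σ k) (σ ++ σ) := ax23 σ _ _ hσ hne hσ h1
      have h3 := ax21 σ hσ
      rw [rep_succ]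
      exact ⟨htrans _ _ _ hne2 hne3 hσ h2.1 h3.1,
             htrans _ _ _ hσ hne3 hne2 h3.2 h2.2⟩

theorem stmt16 {X : Type*}
    (le : List X → List X → Prop)
    (hrefl : ∀ σ : List X, σ ≠ [] → le σ σ)
    (htrans : ∀ σ τ ρ : List X, σ ≠ [] → τ ≠ [] → ρ ≠ [] → le σ τ → le τ ρ → le σ ρ)
    (htotal : ∀ σ τ : List X, σ ≠ [] → τ ≠ [] → le σ τ ∨ le τ σ)
    (ax21 : ∀ σ : List X, σ ≠ [] → eqv le (σ ++ σ) σ)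
    (ax23 : ∀ σ σ' σ'' : List X, σ ≠ [] → σ' ≠ [] → σ'' ≠ [] → eqv le σ' σ'' → eqv le (σ ++ σ') (σ ++ σ''))
    (ax3 : ∀ σ σ' : List X, σ ≠ [] → σ' ≠ [] → eqv le (σ ++ σ') (σ' ++ σ))
    (m n : ℕ) (hm : 1 ≤ m) (hn : 1 ≤ n)
    (σ σ' τ τ' : List X)
    (hσ : σ.length = m) (hσ' : σ'.length = n) (hτ : τ.length = m) (hτ' : τ'.length = n)
    (h1 : eqv le σ τ) (h2 : eqv le σ' τ') :
    le (rep σ n) (rep σ' m) ↔ le (rep τ n) (rep τ' m) := by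
  have hσne : σ ≠ [] := by intro h; rw [h] at hσ; simp at hσ; omega
  have hτne : τ ≠ [] := by intro h; rw [h] at hτ; simp at hτ; omega
  have hσ'ne : σ' ≠ [] := by intro h; rw [h] at hσ'; simp at hσ'; omega
  have hτ'ne : τ' ≠ [] := by intro h; rw [h] at hτ'; simp at hτ'; omega
  have eσ := rep_eqv le hrefl htrans ax21 ax23 σ hσne n hn
  have eτ := rep_eqv le hrefl htrans ax21 ax23 τ hτne n hn
  have eσ' := rep_eqv le hrefl htrans ax21 ax23 σ' hσ'ne m hm
  have eτ' := rep_eqv le hrefl htrans ax21 ax23 τ' hτ'ne m hm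
  have rσ := rep_ne σ hσne hn
  have rτ := rep_ne τ hτne hn
  have rσ' := rep_ne σ' hσ'ne hm
  have rτ' := rep_ne τ' hτ'ne hm
  constructor
  · intro h
    have t1 : le (rep τ n) σ := htrans _ _ _ rτ hτne hσne eτ.1 h1.2
    have t2 : le (rep τ n) (rep σ n) := htrans _ _ _ rτ hσne rσ t1 eσ.2
    have t3 : le (rep τ n) (rep σ' m) := htrans _ _ _ rτ rσ rσ' t2 h
    have t4 : le (rep τ n) τ' := htrans _ _ _ rτ rσ' hτ'ne t3
      (htrans _ _ _ rσ' hσ'ne hτ'ne eσ'.1 h2.1)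
    exact htrans _ _ _ rτ hτ'ne rτ' t4 eτ'.2
  · intro h
    have t1 : le (rep σ n) τ := htrans _ _ _ rσ hσne hτne eσ.1 h1.1
    have t2 : le (rep σ n) (rep τ n) := htrans _ _ _ rσ hτne rτ t1 eτ.2
    have t3 : le (rep σ n) (rep τ' m) := htrans _ _ _ rσ rτ rτ' t2 h
    have t4 : le (rep σ n) σ' := htrans _ _ _ rσ rτ' hσ'ne t3
      (htrans _ _ _ rτ' hτ'ne hσ'ne eτ'.1 h2.2)
    exact htrans _ _ _ rσ hσ'ne rσ' t4 eσ'.2
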